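/- Let n ≥ 1, let λ be a partition with l(λ) = n, and let μ ⊆ λ be a partition with l(μ) = n−1. Then the following identity holds in ℤ[t]: Σ_β φ_{λ/β}(t²) · t^{2(|β|−|μ|)} · sk_{β/μ}(t²) = sk_{λ/μ}(t²), where the sum is over all partitions β with μ ⊆ β and β ≼ λ (i.e. λ/β is a horizontal strip). -/

import Mathlib

open scoped BigOperators Classical

namespace EK

/-- Conjugate partition: `conj f j = #{i : f i ≥ j}` (parts of `f` are `f 0, f 1, …`,
i.e. `f i = λ_{i+1}`). -/
noncomputable def conj (f : ℕ → ℕ) (j : ℕ) : ℕ := Nat.card {i : ℕ // j ≤ f i}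

/-- `f` represents a partition: weakly decreasing with finitely many nonzero parts. -/
def IsPartition (f : ℕ → ℕ) : Prop := Antitone f ∧ ∃ N, ∀ i, N ≤ i → f i = 0

/-- `l(f) = n`: the first `n` parts are positive, the rest vanish. -/
def HasLength (f : ℕ → ℕ) (n : ℕ) : Prop := (∀ i < n, 0 < f i) ∧ ∀ i, n ≤ i → f i = 0

/-- `|λ| = Σ_i λ_i`. -/
noncomputable def psize (f : ℕ → ℕ) : ℕ := ∑ᶠ i, f i

/-- `n(λ) = Σ_{i ≥ 1} (i-1) λ_i` (0-indexed: `Σ_i i * f i`). -/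
noncomputable def nstat (f : ℕ → ℕ) : ℕ := ∑ᶠ i, i * f i

/-- `φ_r(u) = ∏_{i=1}^r (1 - u^i)`. -/
def phiPoch {F : Type*} [Field F] (u : F) (r : ℕ) : F := ∏ i ∈ Finset.Icc 1 r, (1 - u ^ i)

/-- Gaussian binomial `binom(a,b)_u = φ_a(u)/(φ_b(u) φ_{a-b}(u))` for `0 ≤ b ≤ a`, `0` otherwise. -/
noncomputable def gauss {F : Type*} [Field F] (u : F) (a b : ℤ) : F :=
  if 0 ≤ b ∧ b ≤ a then phiPoch u a.toNat / (phiPoch u b.toNat * phiPoch u (a - b).toNat)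
  else 0

/-- `sk_{λ/μ}(u) = u^{Σ_{j≥1} C(λ'_j - μ'_j, 2)} ∏_{j≥1} binom(λ'_j - μ'_{j+1}, m_j(μ))_u`
(the factors for `j > λ_1` are all `1` and the exponents vanish there, so the product and
sum are taken over `1 ≤ j ≤ λ_1 = f 0`). -/
noncomputable def sk {F : Type*} [Field F] (u : F) (f g : ℕ → ℕ) : F :=
  u ^ (∑ j ∈ Finset.Icc 1 (f 0), Nat.choose (conj f j - conj g j) 2) *
    ∏ j ∈ Finset.Icc 1 (f 0),
      gauss u ((conj f j : ℤ) - (conj g (j + 1) : ℤ)) ((conj g j : ℤ) - (conj g (j + 1) : ℤ))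

/-- `μ ⊆ λ` and `λ/μ` is a horizontal strip, i.e. `λ'_j - μ'_j ∈ {0,1}` for all `j ≥ 1`. -/
def IsHStrip (f g : ℕ → ℕ) : Prop :=
  (∀ i, g i ≤ f i) ∧ ∀ j, 1 ≤ j → conj f j ≤ conj g j + 1

/-- `φ_{λ/μ}(u) = ∏_{j ≥ 1, λ'_j = μ'_j + 1, λ'_{j+1} = μ'_{j+1}} (1 - u^{m_j(λ)})` if `λ/μ` is
a horizontal strip, and `0` otherwise (factors with `j > λ_1` never occur). -/
noncomputable def phiStrip {F : Type*} [Field F] (u : F) (f g : ℕ → ℕ) : F :=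
  if IsHStrip f g then
    ∏ j ∈ (Finset.Icc 1 (f 0)).filter
        (fun j => conj f j = conj g j + 1 ∧ conj f (j + 1) = conj g (j + 1)),
      (1 - u ^ (conj f j - conj f (j + 1)))
  else 0

/-- `b_λ(u) = ∏_{i ≥ 1} φ_{m_i(λ)}(u)` (factors with `i > λ_1` are `1`). -/
noncomputable def bcoef {F : Type*} [Field F] (u : F) (f : ℕ → ℕ) : F :=
  ∏ i ∈ Finset.Icc 1 (f 0), phiPoch u (conj f i - conj f (i + 1))


section Aux
variable {f g : ℕ → ℕ}

lemma conj_lt_iff (hf : IsPartition f) {j : ℕ} (hj : 1 ≤ j) (i : ℕ) :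
    j ≤ f i ↔ i < conj f j := by
  obtain ⟨hanti, N, hN⟩ := hf
  set T := (Finset.range N).filter (fun i => j ≤ f i) with hT
  have hmem : ∀ i, i ∈ T ↔ j ≤ f i := by
    intro i
    simp only [hT, Finset.mem_filter, Finset.mem_range]
    constructor
    · exact fun h => h.2
    · intro h
      refine ⟨?_, h⟩
      by_contra hge
      push_neg at hge
      have := hN i hge
      omega
  have hcard : conj f j = T.card := by
    have hset : {i : ℕ | j ≤ f i} = ↑T := by
      ext i
      simp only [Set.mem_setOf_eq, Finset.coe_sort_coe, Finset.mem_coe]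
      exact (hmem i).symm
    unfold conj
    have : Nat.card {i : ℕ // j ≤ f i} = Nat.card {i : ℕ | j ≤ f i} := rfl
    rw [this, Nat.card_coe_set_eq, hset, Set.ncard_coe_finset]
  have hdc : ∀ i1 i2, i1 ≤ i2 → i2 ∈ T → i1 ∈ T := by
    intro i1 i2 h12 h2
    rw [hmem] at h2 ⊢
    exact le_trans h2 (hanti h12)
  have hTr : T = Finset.range T.card := by
    apply Finset.Subset.antisymm
    · intro t ht
      rw [Finset.mem_range]
      by_contra hge
      push_neg at hge
      have hsub : Finset.range (t + 1) ⊆ T := by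
        intro s hs
        exact hdc s t (by simpa using Nat.lt_succ_iff.1 (Finset.mem_range.1 hs)) ht
      have := Finset.card_le_card hsub
      rw [Finset.card_range] at this
      omega
    · intro i hi
      rw [Finset.mem_range] at hi
      by_contra hiT
      have hsub : T ⊆ Finset.range i := by
        intro t ht
        rw [Finset.mem_range]
        by_contra hti
        push_neg at hti
        exact hiT (hdc i t hti ht)
      have := Finset.card_le_card hsub
      rw [Finset.card_range] at this
      omega
  rw [hcard]
  constructor
  · intro h
    have : i ∈ T := (hmem i).2 h
    rw [hTr, Finset.mem_range] at this
    exact this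
  · intro h
    have : i ∈ T := by rw [hTr, Finset.mem_range]; exact h
    exact (hmem i).1 this

lemma conj_eq_zero (hf : IsPartition f) {j : ℕ} (hj : f 0 < j) : conj f j = 0 := by
  by_contra h
  have h0 : 0 < conj f j := Nat.pos_of_ne_zero h
  have := (conj_lt_iff hf (by omega) 0).2 h0
  omega

lemma conj_anti (hf : IsPartition f) {j j' : ℕ} (h1 : 1 ≤ j) (hjj : j ≤ j') :
    conj f j' ≤ conj f j := by
  rcases Nat.eq_zero_or_pos (conj f j') with h | h
  · omega
  · have hi : conj f j' - 1 < conj f j' := by omega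
    have := (conj_lt_iff hf (by omega) (conj f j' - 1)).2 hi
    have h2 : j ≤ f (conj f j' - 1) := le_trans hjj this
    have := (conj_lt_iff hf h1 (conj f j' - 1)).1 h2
    omega

lemma conj_mono_of_le (hg : IsPartition g) (hf : IsPartition f) (hsub : ∀ i, g i ≤ f i)
    {j : ℕ} (hj : 1 ≤ j) : conj g j ≤ conj f j := by
  rcases Nat.eq_zero_or_pos (conj g j) with h | h
  · omega
  · have hi : conj g j - 1 < conj g j := by omega
    have h1 := (conj_lt_iff hg hj (conj g j - 1)).2 hi
    have h2 : j ≤ f (conj g j - 1) := le_trans h1 (hsub _)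
    have := (conj_lt_iff hf hj (conj g j - 1)).1 h2
    omega

lemma conj_pos_iff (hf : IsPartition f) {j : ℕ} (hj : 1 ≤ j) :
    1 ≤ conj f j ↔ j ≤ f 0 := by
  rw [conj_lt_iff hf hj 0]
  omega

lemma row_eq_card (hf : IsPartition f) {M : ℕ} (hM : f 0 ≤ M) (i : ℕ) :
    f i = ((Finset.Icc 1 M).filter (fun j => i < conj f j)).card := by
  have hfilter : (Finset.Icc 1 M).filter (fun j => i < conj f j) = Finset.Icc 1 (f i) := by
    ext j
    simp only [Finset.mem_filter, Finset.mem_Icc]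
    constructor
    · intro ⟨⟨h1, hM'⟩, hlt⟩
      exact ⟨h1, (conj_lt_iff hf h1 i).2 hlt⟩
    · intro ⟨h1, hle⟩
      have hfi : f i ≤ M := le_trans (hf.1 (Nat.zero_le i)) hM
      exact ⟨⟨h1, by omega⟩, (conj_lt_iff hf h1 i).1 hle⟩
  rw [hfilter, Nat.card_Icc]
  omega

lemma conj_le_of_vanish (hf : IsPartition f) {N : ℕ} (hN : ∀ i, N ≤ i → f i = 0)
    {j : ℕ} (hj : 1 ≤ j) : conj f j ≤ N := by
  by_contra h
  push_neg at h
  have := (conj_lt_iff hf hj N).2 h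
  have := hN N (le_refl N)
  omega

lemma psize_eq_sum_range {N : ℕ} (hN : ∀ i, N ≤ i → f i = 0) :
    psize f = ∑ i ∈ Finset.range N, f i := by
  unfold psize
  apply finsum_eq_sum_of_support_subset
  intro i hi
  simp only [Function.mem_support] at hi
  simp only [Finset.coe_range, Set.mem_Iio]
  by_contra h
  push_neg at h
  exact hi (hN i h)

lemma psize_eq_col_sum (hf : IsPartition f) {M : ℕ} (hM : f 0 ≤ M) :
    psize f = ∑ j ∈ Finset.Icc 1 M, conj f j := by
  obtain ⟨hanti, N, hN⟩ := hf
  have hp : IsPartition f := ⟨hanti, N, hN⟩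
  rw [psize_eq_sum_range hN]
  have h1 : ∀ i ∈ Finset.range N, f i = ∑ j ∈ Finset.Icc 1 M, if i < conj f j then 1 else 0 := by
    intro i _
    rw [row_eq_card hp hM i, Finset.card_filter]
  rw [Finset.sum_congr rfl h1, Finset.sum_comm]
  refine Finset.sum_congr rfl fun j hj => ?_
  have hj1 : 1 ≤ j := (Finset.mem_Icc.1 hj).1
  have hcle : conj f j ≤ N := conj_le_of_vanish hp hN hj1
  rw [← Finset.card_filter]
  have : (Finset.range N).filter (fun i => i < conj f j) = Finset.range (conj f j) := by
    ext i
    simp only [Finset.mem_filter, Finset.mem_range]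
    omega
  rw [this, Finset.card_range]


variable {F : Type*} [Field F]

lemma phiPoch_ne_zero {u : F} (hU : ∀ k : ℕ, 1 ≤ k → u ^ k ≠ 1) (r : ℕ) :
    phiPoch u r ≠ 0 := by
  unfold phiPoch
  refine Finset.prod_ne_zero_iff.2 fun i hi => ?_
  intro h
  exact (hU i (Finset.mem_Icc.1 hi).1) (by linear_combination -h)

lemma phiPoch_succ (u : F) (r : ℕ) : phiPoch u (r + 1) = phiPoch u r * (1 - u ^ (r + 1)) := by
  unfold phiPoch
  rw [← Finset.prod_Icc_succ_top (by omega : 1 ≤ r + 1)]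

lemma gauss_step {u : F} (hu : u ≠ 0) (hU : ∀ k : ℕ, 1 ≤ k → u ^ k ≠ 1) (A B : ℤ) :
    (1 - u ^ A) * gauss u (A - 1) B = (1 - u ^ (A - B)) * gauss u A B := by
  unfold gauss
  by_cases hB : 0 ≤ B ∧ B ≤ A
  · rcases eq_or_lt_of_le hB.2 with hBA | hBA
    · subst hBA
      have h1 : ¬ (0 ≤ B ∧ B ≤ B - 1) := by omega
      rw [if_neg h1, if_pos ⟨hB.1, le_refl B⟩]
      simp [sub_self]
    · have hA1 : 1 ≤ A := by omega
      rw [if_pos ⟨hB.1, by omega⟩, if_pos hB]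
      have hAt : A.toNat = (A - 1).toNat + 1 := by omega
      have hABt : (A - B).toNat = (A - 1 - B).toNat + 1 := by omega
      have e1 : phiPoch u A.toNat = phiPoch u (A - 1).toNat * (1 - u ^ ((A-1).toNat + 1)) := by
        rw [hAt, phiPoch_succ]
      have e2 : phiPoch u (A - B).toNat
          = phiPoch u (A - 1 - B).toNat * (1 - u ^ ((A-1-B).toNat + 1)) := by
        rw [hABt, phiPoch_succ]
      have hxA : u ^ A = u ^ ((A-1).toNat + 1) := by
        rw [← zpow_natCast u ((A-1).toNat + 1)]; congr 1; omega
      have hxAB : u ^ (A - B) = u ^ ((A-1-B).toNat + 1) := by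
        rw [← zpow_natCast u ((A-1-B).toNat + 1)]; congr 1; omega
      rw [e1, e2, hxA, hxAB]
      have hne1 : phiPoch u B.toNat ≠ 0 := phiPoch_ne_zero hU _
      have hne2 : phiPoch u (A - 1 - B).toNat ≠ 0 := phiPoch_ne_zero hU _
      have hne3 : (1 - u ^ ((A-1-B).toNat + 1)) ≠ 0 := by
        intro h
        exact (hU ((A-1-B).toNat + 1) (by omega)) (by linear_combination -h)
      set p := phiPoch u (A - 1).toNat
      set q := phiPoch u B.toNat
      set r := phiPoch u (A - 1 - B).toNat
      set x := u ^ ((A-1).toNat + 1)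
      set y := u ^ ((A-1-B).toNat + 1)
      field_simp
  · rw [if_neg hB, if_neg (by omega : ¬ (0 ≤ B ∧ B ≤ A - 1))]
    simp

noncomputable def colW (u : F) (a b : ℕ → ℤ) (S : Finset ℕ) (j : ℕ) : F :=
  (if j ∈ S then 1 else u ^ (a j - b j)) *
    gauss u (a j - (if j ∈ S then 1 else 0) - b (j + 1)) (b j - b (j + 1)) *
    (if j ∈ S ∧ j + 1 ∉ S then 1 - u ^ (a j - a (j + 1)) else 1)

lemma colKey_strong {u : F} (hu : u ≠ 0) (hU : ∀ k : ℕ, 1 ≤ k → u ^ k ≠ 1) :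
    ∀ (m k : ℕ) (a b : ℕ → ℤ), a (k + m) = 0 → b (k + m) = 0 → ∀ v₀ v₁ : F,
    (∑ S ∈ (Finset.Ico k (k + m)).powerset,
      (if k ∈ S then v₀ else v₁) * ∏ j ∈ Finset.Ico k (k + m), colW u a b S j)
    = (v₀ * (1 - u ^ (a k - b k)) + v₁ * u ^ (a k - b k)) *
        ∏ j ∈ Finset.Ico k (k + m), gauss u (a j - b (j + 1)) (b j - b (j + 1)) := by
  intro m
  induction m with
  | zero =>
    intro k a b ha hb v₀ v₁
    simp only [Nat.add_zero] at ha hb ⊢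
    simp only [Finset.Ico_self, Finset.powerset_empty, Finset.sum_singleton,
      Finset.prod_empty, Finset.notMem_empty, if_false, mul_one]
    rw [ha, hb]
    simp
  | succ m ih =>
    intro k a b ha hb v₀ v₁
    have hins : Finset.Ico k (k + (m + 1)) = insert k (Finset.Ico (k + 1) (k + 1 + m)) := by
      ext x; simp only [Finset.mem_Ico, Finset.mem_insert]; omega
    have hknot : k ∉ Finset.Ico (k + 1) (k + 1 + m) := by simp
    have hb1 : ∀ (T : Finset ℕ), T ⊆ Finset.Ico (k + 1) (k + 1 + m) → k ∉ T := by
      intro T hT hk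
      exact hknot (hT hk)
    rw [hins, Finset.sum_powerset_insert hknot]
    have hprod : ∀ (S : Finset ℕ),
        ∏ j ∈ insert k (Finset.Ico (k + 1) (k + 1 + m)), colW u a b S j
        = colW u a b S k * ∏ j ∈ Finset.Ico (k + 1) (k + 1 + m), colW u a b S j :=
      fun S => Finset.prod_insert hknot
    have hboundary : a (k + 1 + m) = 0 := by rw [show k + 1 + m = k + (m+1) by omega]; exact ha
    have hboundary' : b (k + 1 + m) = 0 := by rw [show k + 1 + m = k + (m+1) by omega]; exact hb
    have sum1 : (∑ T ∈ (Finset.Ico (k + 1) (k + 1 + m)).powerset,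
        (if k ∈ T then v₀ else v₁) * ∏ j ∈ insert k (Finset.Ico (k + 1) (k + 1 + m)), colW u a b T j)
        = v₁ * (u ^ (a k - b k) * gauss u (a k - b (k + 1)) (b k - b (k + 1))) *
          (((1:F) * (1 - u ^ (a (k+1) - b (k+1))) + 1 * u ^ (a (k+1) - b (k+1))) *
            ∏ j ∈ Finset.Ico (k + 1) (k + 1 + m), gauss u (a j - b (j + 1)) (b j - b (j + 1))) := by
      rw [← ih (k + 1) a b hboundary hboundary', Finset.mul_sum]
      refine Finset.sum_congr rfl fun T hT => ?_
      have hkT : k ∉ T := hb1 T (Finset.mem_powerset.1 hT)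
      have hck : colW u a b T k = u ^ (a k - b k) * gauss u (a k - b (k + 1)) (b k - b (k + 1)) := by
        unfold colW
        rw [if_neg hkT, if_neg hkT, if_neg (by tauto : ¬ (k ∈ T ∧ k + 1 ∉ T)),
          show a k - 0 - b (k+1) = a k - b (k+1) by ring]
        ring
      rw [hprod, hck, if_neg hkT, ite_self]
      ring
    have sum2 : (∑ T ∈ (Finset.Ico (k + 1) (k + 1 + m)).powerset,
        (if k ∈ insert k T then v₀ else v₁) *
          ∏ j ∈ insert k (Finset.Ico (k + 1) (k + 1 + m)), colW u a b (insert k T) j)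
        = v₀ * gauss u (a k - 1 - b (k + 1)) (b k - b (k + 1)) *
          (((1:F) * (1 - u ^ (a (k+1) - b (k+1))) + (1 - u ^ (a k - a (k+1))) * u ^ (a (k+1) - b (k+1))) *
            ∏ j ∈ Finset.Ico (k + 1) (k + 1 + m), gauss u (a j - b (j + 1)) (b j - b (j + 1))) := by
      rw [← ih (k + 1) a b hboundary hboundary', Finset.mul_sum]
      refine Finset.sum_congr rfl fun T hT => ?_
      have hTsub := Finset.mem_powerset.1 hT
      have hkT : k ∉ T := hb1 T hTsub
      have hrest : ∀ j ∈ Finset.Ico (k + 1) (k + 1 + m),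
          colW u a b (insert k T) j = colW u a b T j := by
        intro j hj
        have hj1 : k + 1 ≤ j := (Finset.mem_Ico.1 hj).1
        have e1 : j ∈ insert k T ↔ j ∈ T := by
          simp only [Finset.mem_insert]
          constructor
          · rintro (h | h); · omega
            · exact h
          · exact fun h => Or.inr h
        have e2 : j + 1 ∈ insert k T ↔ j + 1 ∈ T := by
          simp only [Finset.mem_insert]
          constructor
          · rintro (h | h); · omega
            · exact h
          · exact fun h => Or.inr h
        unfold colW
        simp only [e1, e2]
      rw [hprod, Finset.prod_congr rfl hrest, if_pos (Finset.mem_insert_self k T)]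
      have hck : colW u a b (insert k T) k
          = gauss u (a k - 1 - b (k + 1)) (b k - b (k + 1)) *
            (if k + 1 ∈ T then (1:F) else 1 - u ^ (a k - a (k + 1))) := by
        unfold colW
        rw [if_pos (Finset.mem_insert_self k T), if_pos (Finset.mem_insert_self k T)]
        have e2 : k + 1 ∈ insert k T ↔ k + 1 ∈ T := by
          simp only [Finset.mem_insert]
          constructor
          · rintro (h | h); · omega
            · exact h
          · exact fun h => Or.inr h
        by_cases h1 : k + 1 ∈ T
        · rw [if_neg (by simp only [e2]; tauto : ¬ (k ∈ insert k T ∧ k + 1 ∉ insert k T)), if_pos h1]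
          ring
        · rw [if_pos ⟨Finset.mem_insert_self k T, by simp only [e2]; exact h1⟩, if_neg h1]
          ring
      rw [hck]
      ring
    rw [sum1, sum2]
    have halg1 : ((1:F) * (1 - u ^ (a (k+1) - b (k+1))) + 1 * u ^ (a (k+1) - b (k+1))) = 1 := by ring
    have halg2 : ((1:F) * (1 - u ^ (a (k+1) - b (k+1))) + (1 - u ^ (a k - a (k+1))) * u ^ (a (k+1) - b (k+1)))
        = 1 - u ^ (a k - b (k + 1)) := by
      have h : u ^ (a k - a (k+1)) * u ^ (a (k+1) - b (k+1)) = u ^ (a k - b (k+1)) := by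
        rw [← zpow_add₀ hu]; congr 1; ring
      linear_combination -h
    rw [halg1, halg2, Finset.prod_insert hknot]
    have hgs : (1 - u ^ (a k - b (k + 1))) * gauss u (a k - 1 - b (k + 1)) (b k - b (k + 1))
        = (1 - u ^ (a k - b k)) * gauss u (a k - b (k + 1)) (b k - b (k + 1)) := by
      have h := gauss_step hu hU (a k - b (k + 1)) (b k - b (k + 1))
      rw [show a k - b (k+1) - 1 = a k - 1 - b (k+1) by ring,
        show a k - b (k+1) - (b k - b (k+1)) = a k - b k by ring] at h
      exact h
    linear_combination (v₀ * ∏ j ∈ Finset.Ico (k + 1) (k + 1 + m), gauss u (a j - b (j + 1)) (b j - b (j + 1))) * hgs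


end Aux

section Aux2
variable {f g : ℕ → ℕ} {S : Finset ℕ} {F : Type*} [Field F]

/-- admissibility of a removal set. -/
def Adm (f g : ℕ → ℕ) (S : Finset ℕ) : Prop :=
  (∀ j ∈ S, conj g j < conj f j) ∧
    ∀ j ∈ S, j + 1 ≤ f 0 → conj f (j + 1) = conj f j → j + 1 ∈ S

/-- the column profile after removal. -/
noncomputable def cfun (f : ℕ → ℕ) (S : Finset ℕ) (j : ℕ) : ℕ :=
  conj f j - (if j ∈ S then 1 else 0)

/-- the partition after removal, in row coordinates. -/
noncomputable def bet (f : ℕ → ℕ) (S : Finset ℕ) (i : ℕ) : ℕ :=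
  f i - (S.filter (fun j => conj f j = i + 1)).card

lemma cfun_pos_mem (hAdm : Adm f g S) : ∀ j ∈ S, 1 ≤ conj f j :=
  fun j hj => lt_of_le_of_lt (Nat.zero_le _) (hAdm.1 j hj)

lemma cfun_adj (hf : IsPartition f) (hAdm : Adm f g S) {j : ℕ} (hj : 1 ≤ j) :
    cfun f S (j + 1) ≤ cfun f S j := by
  unfold cfun
  have hmono : conj f (j + 1) ≤ conj f j := conj_anti hf hj (by omega)
  by_cases h1 : j + 1 ∈ S
  · by_cases h2 : j ∈ S
    · simp only [h1, h2, if_true]; omega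
    · simp only [h1, h2, if_true, if_false]; omega
  · by_cases h2 : j ∈ S
    · have hcf1 : 1 ≤ conj f j := cfun_pos_mem hAdm j h2
      by_cases hle : j + 1 ≤ f 0
      · have hne : conj f (j + 1) ≠ conj f j := fun he => h1 (hAdm.2 j h2 hle he)
        simp only [h1, h2, if_true, if_false]; omega
      · have h0 : conj f (j + 1) = 0 := conj_eq_zero hf (by omega)
        simp only [h1, h2, if_true, if_false]; omega
    · simp only [h1, h2, if_false]; omega

lemma cfun_anti (hf : IsPartition f) (hAdm : Adm f g S) {j j' : ℕ}
    (h1 : 1 ≤ j) (hjj : j ≤ j') : cfun f S j' ≤ cfun f S j := by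
  induction j', hjj using Nat.le_induction with
  | base => exact le_refl _
  | succ j' hjj ih => exact le_trans (cfun_adj hf hAdm (by omega)) ih

lemma cfun_eq_of_not_mem {j : ℕ} (h : j ∉ S) : cfun f S j = conj f j := by
  unfold cfun; simp [h]

lemma bet_eq_card (hf : IsPartition f) (hS : S ⊆ Finset.Icc 1 (f 0)) (hAdm : Adm f g S)
    (i : ℕ) :
    bet f S i = ((Finset.Icc 1 (f 0)).filter (fun j => i < cfun f S j)).card := by
  have hBA : (Finset.Icc 1 (f 0)).filter (fun j => j ∈ S ∧ conj f j = i + 1)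
      ⊆ (Finset.Icc 1 (f 0)).filter (fun j => i < conj f j) := by
    intro j hj
    rw [Finset.mem_filter] at hj
    rw [Finset.mem_filter]
    exact ⟨hj.1, by omega⟩
  have hfilter : (Finset.Icc 1 (f 0)).filter (fun j => i < cfun f S j)
      = (Finset.Icc 1 (f 0)).filter (fun j => i < conj f j)
        \ (Finset.Icc 1 (f 0)).filter (fun j => j ∈ S ∧ conj f j = i + 1) := by
    ext j
    simp only [Finset.mem_sdiff, Finset.mem_filter]; simp only [cfun]
    by_cases hjS : j ∈ S
    · have hcf1 : 1 ≤ conj f j := cfun_pos_mem hAdm j hjS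
      simp only [hjS, if_true, true_and]
      constructor
      · intro ⟨hIcc, hlt⟩
        exact ⟨⟨hIcc, by omega⟩, fun h => by have := h.2; omega⟩
      · intro ⟨⟨hIcc, hlt⟩, hne⟩
        refine ⟨hIcc, ?_⟩
        by_cases hcfi : conj f j = i + 1
        · exact absurd ⟨hIcc, hcfi⟩ hne
        · omega
    · simp only [hjS, if_false, false_and, and_false, not_false_eq_true, and_true,
        Nat.sub_zero]
  have hBcard : (Finset.Icc 1 (f 0)).filter (fun j => j ∈ S ∧ conj f j = i + 1)
      = S.filter (fun j => conj f j = i + 1) := by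
    ext j
    simp only [Finset.mem_filter]
    constructor
    · intro ⟨_, h2, h3⟩; exact ⟨h2, h3⟩
    · intro ⟨h2, h3⟩; exact ⟨hS h2, h2, h3⟩
  rw [hfilter, Finset.card_sdiff_of_subset hBA, hBcard, ← row_eq_card hf (le_refl (f 0)) i]
  rfl

lemma bet_le (hf : IsPartition f) (hS : S ⊆ Finset.Icc 1 (f 0)) (hAdm : Adm f g S)
    (i : ℕ) : bet f S i ≤ f i := Nat.sub_le _ _

lemma bet_isPartition (hf : IsPartition f) (hS : S ⊆ Finset.Icc 1 (f 0)) (hAdm : Adm f g S) :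
    IsPartition (bet f S) := by
  constructor
  · intro i i' hii
    rw [bet_eq_card hf hS hAdm, bet_eq_card hf hS hAdm]
    apply Finset.card_le_card
    intro j hj
    rw [Finset.mem_filter] at hj ⊢
    exact ⟨hj.1, by omega⟩
  · obtain ⟨_, N, hN⟩ := hf
    exact ⟨N, fun i hi => by
      have := Nat.sub_le (f i) (S.filter (fun j => conj f j = i + 1)).card
      have := hN i hi
      unfold bet
      omega⟩

lemma conj_bet (hf : IsPartition f) (hS : S ⊆ Finset.Icc 1 (f 0)) (hAdm : Adm f g S)
    {j : ℕ} (hj : 1 ≤ j) : conj (bet f S) j = cfun f S j := by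
  have hbp : IsPartition (bet f S) := bet_isPartition hf hS hAdm
  by_cases hjJ : j ≤ f 0
  · -- key : ∀ i, j ≤ bet f S i ↔ i < cfun f S j
    have key : ∀ i, j ≤ bet f S i ↔ i < cfun f S j := by
      intro i
      rw [bet_eq_card hf hS hAdm i]
      constructor
      · intro hle
        by_contra hc
        push_neg at hc
        have hsub : (Finset.Icc 1 (f 0)).filter (fun j' => i < cfun f S j')
            ⊆ Finset.Icc 1 (j - 1) := by
          intro j' hj'
          rw [Finset.mem_filter, Finset.mem_Icc] at hj'
          rw [Finset.mem_Icc]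
          refine ⟨hj'.1.1, ?_⟩
          by_contra hge
          push_neg at hge
          have : cfun f S j' ≤ cfun f S j := cfun_anti hf hAdm hj (by omega)
          omega
        have := Finset.card_le_card hsub
        rw [Nat.card_Icc] at this
        omega
      · intro hlt
        have hsub : Finset.Icc 1 j ⊆ (Finset.Icc 1 (f 0)).filter (fun j' => i < cfun f S j') := by
          intro j' hj'
          rw [Finset.mem_Icc] at hj'
          rw [Finset.mem_filter, Finset.mem_Icc]
          refine ⟨⟨hj'.1, by omega⟩, ?_⟩
          have : cfun f S j ≤ cfun f S j' := cfun_anti hf hAdm hj'.1 hj'.2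
          omega
        have := Finset.card_le_card hsub
        rw [Nat.card_Icc] at this
        omega
    have h1 := fun i => ((conj_lt_iff hbp hj i).symm.trans (key i))
    have h2 := h1 (conj (bet f S) j)
    have h3 := h1 (cfun f S j)
    omega
  · have h0 : conj f j = 0 := conj_eq_zero hf (by omega)
    have hjS : j ∉ S := fun h => by
      have := Finset.mem_Icc.1 (hS h); omega
    have : conj (bet f S) j ≤ conj f j :=
      conj_mono_of_le hbp hf (bet_le hf hS hAdm) hj
    unfold cfun
    simp only [hjS, if_false]
    omega

lemma cfun_ge_g (hg : IsPartition g) (hf : IsPartition f) (hsub : ∀ i, g i ≤ f i)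
    (hAdm : Adm f g S) {j : ℕ} (hj : 1 ≤ j) : conj g j ≤ cfun f S j := by
  unfold cfun
  by_cases hjS : j ∈ S
  · have := hAdm.1 j hjS
    simp only [hjS, if_true]
    omega
  · simp only [hjS, if_false]
    have := conj_mono_of_le hg hf hsub hj
    omega

lemma bet_ge_g (hg : IsPartition g) (hf : IsPartition f) (hsub : ∀ i, g i ≤ f i)
    (hS : S ⊆ Finset.Icc 1 (f 0)) (hAdm : Adm f g S) (i : ℕ) : g i ≤ bet f S i := by
  rw [bet_eq_card hf hS hAdm i, row_eq_card hg (le_trans (hsub 0) (le_refl (f 0))) i]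
  apply Finset.card_le_card
  intro j hj
  rw [Finset.mem_filter] at hj ⊢
  have hj1 : 1 ≤ j := (Finset.mem_Icc.1 hj.1).1
  have := cfun_ge_g hg hf hsub hAdm hj1
  exact ⟨hj.1, by omega⟩

lemma bet_isHStrip (hg : IsPartition g) (hf : IsPartition f) (hsub : ∀ i, g i ≤ f i)
    (hS : S ⊆ Finset.Icc 1 (f 0)) (hAdm : Adm f g S) : IsHStrip f (bet f S) := by
  refine ⟨bet_le hf hS hAdm, fun j hj => ?_⟩
  rw [conj_bet hf hS hAdm hj]
  unfold cfun
  by_cases hjS : j ∈ S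
  · have := cfun_pos_mem hAdm j hjS
    simp only [hjS, if_true]
    omega
  · simp only [hjS, if_false]
    omega

-- from a partition β to its removal set
lemma conj_strip (hf : IsPartition f) {β : ℕ → ℕ} (hβ : IsPartition β)
    (hstrip : IsHStrip f β) {j : ℕ} (hj : 1 ≤ j) :
    conj β j = conj f j ∨ conj β j + 1 = conj f j := by
  have h1 := hstrip.2 j hj
  have h2 := conj_mono_of_le hβ hf hstrip.1 hj
  omega

lemma strip_eq_bet (hg : IsPartition g) (hf : IsPartition f) {β : ℕ → ℕ} (hβ : IsPartition β)
    (hgβ : ∀ i, g i ≤ β i) (hstrip : IsHStrip f β) :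
    (β = bet f ((Finset.Icc 1 (f 0)).filter (fun j => conj β j < conj f j))) ∧
      Adm f g ((Finset.Icc 1 (f 0)).filter (fun j => conj β j < conj f j)) := by
  set S := (Finset.Icc 1 (f 0)).filter (fun j => conj β j < conj f j) with hSdef
  have hS : S ⊆ Finset.Icc 1 (f 0) := Finset.filter_subset _ _
  have hA1 : ∀ j, 1 ≤ j → conj β j = cfun f S j := by
    intro j hj
    unfold cfun
    by_cases hjJ : j ≤ f 0
    · rcases conj_strip hf hβ hstrip hj with h | h
      · have hjS : j ∉ S := by
          rw [hSdef, Finset.mem_filter]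
          push_neg
          intro _
          omega
        simp only [hjS, if_false]
        omega
      · have hjS : j ∈ S := by
          rw [hSdef, Finset.mem_filter, Finset.mem_Icc]
          exact ⟨⟨hj, hjJ⟩, by omega⟩
        simp only [hjS, if_true]
        omega
    · have h0 : conj f j = 0 := conj_eq_zero hf (by omega)
      have : conj β j ≤ conj f j := conj_mono_of_le hβ hf hstrip.1 hj
      have hjS : j ∉ S := fun h => by
        have := Finset.mem_Icc.1 (hS h); omega
      simp only [hjS, if_false]
      omega
  have hAdm : Adm f g S := by
    constructor
    · intro j hjS
      rw [hSdef, Finset.mem_filter] at hjS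
      have hj1 : 1 ≤ j := (Finset.mem_Icc.1 hjS.1).1
      have := conj_mono_of_le hg hβ hgβ hj1
      omega
    · intro j hjS hle heq
      rw [hSdef, Finset.mem_filter] at hjS ⊢
      have hj1 : 1 ≤ j := (Finset.mem_Icc.1 hjS.1).1
      have hmono : conj β (j + 1) ≤ conj β j := conj_anti hβ hj1 (by omega)
      refine ⟨Finset.mem_Icc.2 ⟨by omega, hle⟩, by omega⟩
  refine ⟨?_, hAdm⟩
  funext i
  rw [bet_eq_card hf hS hAdm i, row_eq_card hβ (le_trans (hstrip.1 0) (le_refl (f 0))) i]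
  congr 1
  apply Finset.filter_congr
  intro j hj
  have hj1 : 1 ≤ j := (Finset.mem_Icc.1 hj).1
  rw [hA1 j hj1]

lemma bet_inj (hf : IsPartition f) {S1 S2 : Finset ℕ}
    (hS1 : S1 ⊆ Finset.Icc 1 (f 0)) (hAdm1 : Adm f g S1)
    (hS2 : S2 ⊆ Finset.Icc 1 (f 0)) (hAdm2 : Adm f g S2)
    (h : bet f S1 = bet f S2) : S1 = S2 := by
  have hc : ∀ j, 1 ≤ j → cfun f S1 j = cfun f S2 j := by
    intro j hj
    rw [← conj_bet hf hS1 hAdm1 hj, ← conj_bet hf hS2 hAdm2 hj, h]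
  ext j
  constructor
  · intro hj
    have hj1 : 1 ≤ j := (Finset.mem_Icc.1 (hS1 hj)).1
    by_contra hj2
    have h1 : 1 ≤ conj f j := cfun_pos_mem hAdm1 j hj
    have := hc j hj1
    unfold cfun at this
    simp only [hj, hj2, if_true, if_false] at this
    omega
  · intro hj
    have hj1 : 1 ≤ j := (Finset.mem_Icc.1 (hS2 hj)).1
    by_contra hj2
    have h1 : 1 ≤ conj f j := cfun_pos_mem hAdm2 j hj
    have := hc j hj1
    unfold cfun at this
    simp only [hj, hj2, if_true, if_false] at this
    omega

lemma strip_set_eq (hg : IsPartition g) (hf : IsPartition f) (hsub : ∀ i, g i ≤ f i) :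
    {β : ℕ → ℕ | IsPartition β ∧ (∀ i, g i ≤ β i) ∧ IsHStrip f β}
      = ↑((((Finset.Icc 1 (f 0)).powerset.filter (Adm f g))).image (bet f)) := by
  ext β
  simp only [Set.mem_setOf_eq, Finset.coe_image, Set.mem_image, Finset.mem_coe,
    Finset.mem_filter, Finset.mem_powerset]
  constructor
  · intro ⟨hβ, hgβ, hstrip⟩
    obtain ⟨heq, hAdm⟩ := strip_eq_bet hg hf hβ hgβ hstrip
    exact ⟨_, ⟨Finset.filter_subset _ _, hAdm⟩, heq.symm⟩
  · rintro ⟨S, ⟨hS, hAdm⟩, rfl⟩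
    exact ⟨bet_isPartition hf hS hAdm,
      fun i => bet_ge_g hg hf hsub hS hAdm i,
      bet_isHStrip hg hf hsub hS hAdm⟩


lemma gauss_zero_zero (u : F) : gauss u 0 0 = 1 := by
  unfold gauss
  rw [if_pos ⟨le_refl 0, le_refl 0⟩]
  simp [phiPoch]

lemma term_match (hg : IsPartition g) (hf : IsPartition f) (hsub : ∀ i, g i ≤ f i)
    (hS : S ⊆ Finset.Icc 1 (f 0)) (hAdm : Adm f g S) (u : F) :
    phiStrip u f (bet f S) * u ^ (psize (bet f S) - psize g) * sk u (bet f S) g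
      = u ^ (∑ j ∈ Finset.Icc 1 (f 0), Nat.choose (conj f j - conj g j) 2) *
        ∏ j ∈ Finset.Icc 1 (f 0),
          colW u (fun j => (conj f j : ℤ)) (fun j => (conj g j : ℤ)) S j := by
  set β := bet f S with hβdef
  have hβ : IsPartition β := bet_isPartition hf hS hAdm
  have hβle : ∀ i, β i ≤ f i := bet_le hf hS hAdm
  have hβg : ∀ i, g i ≤ β i := bet_ge_g hg hf hsub hS hAdm
  have hstrip : IsHStrip f β := bet_isHStrip hg hf hsub hS hAdm
  have hβ0 : β 0 ≤ f 0 := hβle 0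
  have hg0 : g 0 ≤ f 0 := hsub 0
  have hconj : ∀ j, 1 ≤ j → conj β j = cfun f S j := fun j hj => conj_bet hf hS hAdm hj
  have hposS : ∀ j ∈ S, 1 ≤ conj f j := cfun_pos_mem hAdm
  have hgf : ∀ j, 1 ≤ j → conj g j ≤ conj f j :=
    fun j hj => conj_mono_of_le hg hf hsub hj
  have hgβ : ∀ j, 1 ≤ j → conj g j ≤ conj β j :=
    fun j hj => conj_mono_of_le hg hβ hβg hj
  have hβf : ∀ j, 1 ≤ j → conj β j ≤ conj f j :=
    fun j hj => conj_mono_of_le hβ hf hβle hj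
  -- zero facts for j > β 0
  have hzero : ∀ j, β 0 < j → conj β j = 0 ∧ conj g j = 0 := by
    intro j hjβ
    have h1 : conj β j = 0 := conj_eq_zero hβ hjβ
    have h2 : conj g j = 0 := by
      have := hgβ j (by omega)
      omega
    exact ⟨h1, h2⟩
  -- STEP 1 : phiStrip
  have step1 : phiStrip u f β
      = ∏ j ∈ Finset.Icc 1 (f 0),
          (if j ∈ S ∧ j + 1 ∉ S then 1 - u ^ ((conj f j : ℤ) - (conj f (j+1) : ℤ)) else 1) := by
    unfold phiStrip
    rw [if_pos hstrip, Finset.prod_filter]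
    refine Finset.prod_congr rfl fun j hj => ?_
    have hj1 : 1 ≤ j := (Finset.mem_Icc.1 hj).1
    have hcβj := hconj j hj1
    have hcβj1 := hconj (j+1) (by omega)
    have hcond : (conj f j = conj β j + 1 ∧ conj f (j+1) = conj β (j+1)) ↔ (j ∈ S ∧ j + 1 ∉ S) := by
      unfold cfun at hcβj hcβj1
      constructor
      · intro ⟨h1, h2⟩
        constructor
        · by_contra hjS
          simp only [hjS, if_false] at hcβj
          omega
        · intro hj1S
          have := hposS (j+1) hj1S
          simp only [hj1S, if_true] at hcβj1
          omega
      · intro ⟨hjS, hj1S⟩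
        have := hposS j hjS
        simp only [hjS, hj1S, if_true, if_false] at hcβj hcβj1
        constructor
        · omega
        · omega
    have hfactor : (1 - u ^ (conj f j - conj f (j+1)) : F)
        = 1 - u ^ ((conj f j : ℤ) - (conj f (j+1) : ℤ)) := by
      have hle : conj f (j+1) ≤ conj f j := conj_anti hf hj1 (by omega)
      rw [show ((conj f j : ℤ) - (conj f (j+1) : ℤ)) = ((conj f j - conj f (j+1) : ℕ) : ℤ) by
        omega]
      rw [zpow_natCast]
    rw [if_congr hcond hfactor rfl]
  -- STEP 2 : gauss products
  have hcast : ∀ j ∈ Finset.Icc 1 (f 0),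
      ((conj β j : ℤ)) = (conj f j : ℤ) - (if j ∈ S then 1 else 0) := by
    intro j hj
    have hj1 : 1 ≤ j := (Finset.mem_Icc.1 hj).1
    have := hconj j hj1
    unfold cfun at this
    by_cases hjS : j ∈ S
    · have := hposS j hjS
      simp only [hjS, if_true] at *
      omega
    · simp only [hjS, if_false] at *
      omega
  have step2 : (∏ j ∈ Finset.Icc 1 (β 0),
        gauss u ((conj β j : ℤ) - (conj g (j + 1) : ℤ)) ((conj g j : ℤ) - (conj g (j + 1) : ℤ)))
      = ∏ j ∈ Finset.Icc 1 (f 0),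
          gauss u ((conj f j : ℤ) - (if j ∈ S then 1 else 0) - (conj g (j + 1) : ℤ))
            ((conj g j : ℤ) - (conj g (j + 1) : ℤ)) := by
    rw [Finset.prod_congr rfl (fun j hj => ?_), Finset.prod_subset
      (Finset.Icc_subset_Icc_right hβ0) (fun j hjf hjβ => ?_)]
    · -- extra terms are 1
      rw [Finset.mem_Icc] at hjf hjβ
      have hj1 : 1 ≤ j := hjf.1
      have hjβ0 : β 0 < j := by omega
      obtain ⟨hb0, hg1⟩ := hzero j hjβ0
      have hg2 : conj g (j+1) = 0 := by
        have := conj_anti hg (by omega : 1 ≤ j) (by omega : j ≤ j + 1)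
        omega
      have harg : (conj f j : ℤ) - (if j ∈ S then 1 else 0) - (conj g (j+1) : ℤ) = 0 := by
        have := hcast j (Finset.mem_Icc.2 ⟨hj1, hjf.2⟩)
        rw [← this]
        simp [hb0, hg2]
      rw [harg, hg1, hg2]
      norm_num
      exact gauss_zero_zero u
    · -- matching terms
      have hj1 : 1 ≤ j := (Finset.mem_Icc.1 hj).1
      have hjf : j ∈ Finset.Icc 1 (f 0) := Finset.mem_Icc.2
        ⟨hj1, le_trans (Finset.mem_Icc.1 hj).2 hβ0⟩
      rw [hcast j hjf]
  -- STEP 3 : exponents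
  have hchoose_ext : (∑ j ∈ Finset.Icc 1 (β 0), Nat.choose (conj β j - conj g j) 2)
      = ∑ j ∈ Finset.Icc 1 (f 0), Nat.choose (conj β j - conj g j) 2 := by
    apply Finset.sum_subset (Finset.Icc_subset_Icc_right hβ0)
    intro j hjf hjβ
    rw [Finset.mem_Icc] at hjf hjβ
    obtain ⟨hb0, hg1⟩ := hzero j (by omega)
    rw [hb0, hg1]
    rfl
  have hsizeβ : psize β = ∑ j ∈ Finset.Icc 1 (f 0), conj β j := psize_eq_col_sum hβ hβ0
  have hsizeg : psize g = ∑ j ∈ Finset.Icc 1 (f 0), conj g j := psize_eq_col_sum hg hg0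
  have hsub_sum : psize β - psize g = ∑ j ∈ Finset.Icc 1 (f 0), (conj β j - conj g j) := by
    rw [hsizeβ, hsizeg, ← Finset.sum_tsub_distrib]
    intro j hj
    exact hgβ j (Finset.mem_Icc.1 hj).1
  have hexp : (psize β - psize g) + (∑ j ∈ Finset.Icc 1 (f 0), Nat.choose (conj β j - conj g j) 2)
      = (∑ j ∈ Finset.Icc 1 (f 0), Nat.choose (conj f j - conj g j) 2)
        + ∑ j ∈ Finset.Icc 1 (f 0), (if j ∈ S then 0 else conj f j - conj g j) := by
    rw [hsub_sum, ← Finset.sum_add_distrib, ← Finset.sum_add_distrib]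
    refine Finset.sum_congr rfl fun j hj => ?_
    have hj1 : 1 ≤ j := (Finset.mem_Icc.1 hj).1
    have hcβ := hconj j hj1
    unfold cfun at hcβ
    have hgfj := hgf j hj1
    have hgβj := hgβ j hj1
    by_cases hjS : j ∈ S
    · have hpos := hposS j hjS
      simp only [hjS, if_true] at hcβ ⊢
      have hd1 : 1 ≤ conj f j - conj g j := by omega
      have harg : conj β j - conj g j = (conj f j - conj g j) - 1 := by omega
      rw [harg]
      have hrec : Nat.choose (conj f j - conj g j) 2
          = Nat.choose ((conj f j - conj g j) - 1) 1 + Nat.choose ((conj f j - conj g j) - 1) 2 := by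
        rw [show conj f j - conj g j = ((conj f j - conj g j) - 1) + 1 by omega]
        rw [Nat.choose_succ_succ]
        simp
      rw [Nat.choose_one_right] at hrec
      omega
    · simp only [hjS, if_false, Nat.sub_zero] at hcβ ⊢
      rw [hcβ, Nat.add_comm]
  have step3 : u ^ (psize β - psize g) * u ^ (∑ j ∈ Finset.Icc 1 (β 0), Nat.choose (conj β j - conj g j) 2)
      = u ^ (∑ j ∈ Finset.Icc 1 (f 0), Nat.choose (conj f j - conj g j) 2) *
        ∏ j ∈ Finset.Icc 1 (f 0), (if j ∈ S then (1:F) else u ^ ((conj f j : ℤ) - (conj g j : ℤ))) := by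
    have hprodpow : (∏ j ∈ Finset.Icc 1 (f 0), (if j ∈ S then (1:F) else u ^ ((conj f j : ℤ) - (conj g j : ℤ))))
        = u ^ (∑ j ∈ Finset.Icc 1 (f 0), (if j ∈ S then 0 else conj f j - conj g j)) := by
      rw [← Finset.prod_pow_eq_pow_sum]
      refine Finset.prod_congr rfl fun j hj => ?_
      have hj1 : 1 ≤ j := (Finset.mem_Icc.1 hj).1
      by_cases hjS : j ∈ S
      · simp [hjS]
      · simp only [hjS, if_false]
        have hle := hgf j hj1
        rw [show ((conj f j : ℤ) - (conj g j : ℤ)) = ((conj f j - conj g j : ℕ) : ℤ) by omega,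
          zpow_natCast]
    rw [hchoose_ext, ← pow_add, hexp, pow_add, hprodpow]
  -- ASSEMBLE
  unfold sk
  rw [step1, step2]
  have hcolW : ∀ j ∈ Finset.Icc 1 (f 0),
      colW u (fun j => (conj f j : ℤ)) (fun j => (conj g j : ℤ)) S j
      = (if j ∈ S then (1:F) else u ^ ((conj f j : ℤ) - (conj g j : ℤ))) *
          gauss u ((conj f j : ℤ) - (if j ∈ S then 1 else 0) - (conj g (j + 1) : ℤ))
            ((conj g j : ℤ) - (conj g (j + 1) : ℤ)) *
          (if j ∈ S ∧ j + 1 ∉ S then 1 - u ^ ((conj f j : ℤ) - (conj f (j+1) : ℤ)) else 1) := by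
    intro j hj
    rfl
  rw [Finset.prod_congr rfl hcolW, Finset.prod_mul_distrib, Finset.prod_mul_distrib]
  calc (∏ j ∈ Finset.Icc 1 (f 0), (if j ∈ S ∧ j + 1 ∉ S then 1 - u ^ ((conj f j : ℤ) - (conj f (j+1) : ℤ)) else 1)) *
        u ^ (psize β - psize g) *
        (u ^ (∑ j ∈ Finset.Icc 1 (β 0), Nat.choose (conj β j - conj g j) 2) *
          ∏ j ∈ Finset.Icc 1 (f 0),
            gauss u ((conj f j : ℤ) - (if j ∈ S then 1 else 0) - (conj g (j + 1) : ℤ))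
              ((conj g j : ℤ) - (conj g (j + 1) : ℤ)))
      = (u ^ (psize β - psize g) * u ^ (∑ j ∈ Finset.Icc 1 (β 0), Nat.choose (conj β j - conj g j) 2)) *
        ((∏ j ∈ Finset.Icc 1 (f 0), (if j ∈ S ∧ j + 1 ∉ S then 1 - u ^ ((conj f j : ℤ) - (conj f (j+1) : ℤ)) else 1)) *
          ∏ j ∈ Finset.Icc 1 (f 0),
            gauss u ((conj f j : ℤ) - (if j ∈ S then 1 else 0) - (conj g (j + 1) : ℤ))
              ((conj g j : ℤ) - (conj g (j + 1) : ℤ))) := by ring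
    _ = _ := by
        rw [step3]
        ring

lemma notAdm_zero (hg : IsPartition g) (hf : IsPartition f) (hsub : ∀ i, g i ≤ f i)
    {u : F} (hS : S ⊆ Finset.Icc 1 (f 0)) (hAdm : ¬ Adm f g S) :
    (∏ j ∈ Finset.Icc 1 (f 0),
      colW u (fun j => (conj f j : ℤ)) (fun j => (conj g j : ℤ)) S j) = 0 := by
  unfold Adm at hAdm
  push_neg at hAdm
  rcases Classical.em (∀ j ∈ S, conj g j < conj f j) with hcase | hcase
  · obtain ⟨j, hjS, hle, heq, hj1S⟩ := hAdm hcase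
    apply Finset.prod_eq_zero (hS hjS)
    unfold colW
    simp [hjS, hj1S, heq]
  · push_neg at hcase
    obtain ⟨j, hjS, hge⟩ := hcase
    have hj1 : 1 ≤ j := (Finset.mem_Icc.1 (hS hjS)).1
    have hgle : conj g j ≤ conj f j := conj_mono_of_le hg hf hsub hj1
    have heq : conj g j = conj f j := by omega
    apply Finset.prod_eq_zero (hS hjS)
    unfold colW
    simp only [hjS, if_true]
    have hzero : gauss u ((conj f j : ℤ) - 1 - (conj g (j+1) : ℤ))
        ((conj g j : ℤ) - (conj g (j+1) : ℤ)) = 0 := by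
      unfold gauss
      rw [if_neg]
      rw [heq]
      push_neg
      intro h
      omega
    rw [hzero]
    ring

lemma hU_X2 : ∀ k : ℕ, 1 ≤ k → ((RatFunc.X : RatFunc ℚ) ^ 2) ^ k ≠ 1 := by
  intro k hk h
  rw [← pow_mul] at h
  have h2 : (algebraMap (Polynomial ℚ) (RatFunc ℚ)) (Polynomial.X ^ (2 * k))
      = (algebraMap (Polynomial ℚ) (RatFunc ℚ)) 1 := by
    rw [map_pow, map_one, RatFunc.algebraMap_X]
    exact h
  have h3 := RatFunc.algebraMap_injective ℚ h2
  have h4 := congrArg Polynomial.natDegree h3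
  rw [Polynomial.natDegree_X_pow, Polynomial.natDegree_one] at h4
  omega


end Aux2

/-- For partitions `λ` of length `n ≥ 1` and `μ ⊆ λ` of length `n-1`,
`Σ_{μ ⊆ β ≼ λ} φ_{λ/β}(t²) t^{2(|β|-|μ|)} sk_{β/μ}(t²) = sk_{λ/μ}(t²)`, the sum being over
all partitions `β` with `μ ⊆ β` and `λ/β` a horizontal strip. -/
theorem stmt0 (n : ℕ) (hn : 1 ≤ n) (f g : ℕ → ℕ)
    (hf : IsPartition f) (hfl : HasLength f n)
    (hg : IsPartition g) (hgl : HasLength g (n - 1))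
    (hsub : ∀ i, g i ≤ f i) :
    (∑ᶠ (β : ℕ → ℕ) (_ : IsPartition β ∧ (∀ i, g i ≤ β i) ∧ IsHStrip f β),
        phiStrip ((RatFunc.X : RatFunc ℚ) ^ 2) f β *
          ((RatFunc.X : RatFunc ℚ) ^ 2) ^ (psize β - psize g) *
          sk ((RatFunc.X : RatFunc ℚ) ^ 2) β g)
      = sk ((RatFunc.X : RatFunc ℚ) ^ 2) f g := by
  set u : RatFunc ℚ := (RatFunc.X : RatFunc ℚ) ^ 2 with hudef
  have hu : u ≠ 0 := pow_ne_zero _ RatFunc.X_ne_zero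
  have hU := hU_X2
  set aZ : ℕ → ℤ := fun j => (conj f j : ℤ) with haZ
  set bZ : ℕ → ℤ := fun j => (conj g j : ℤ) with hbZ
  -- step A : finsum to finset sum over admissible subsets
  have hA : (∑ᶠ (β : ℕ → ℕ) (_ : IsPartition β ∧ (∀ i, g i ≤ β i) ∧ IsHStrip f β),
        phiStrip u f β * u ^ (psize β - psize g) * sk u β g)
      = ∑ S ∈ ((Finset.Icc 1 (f 0)).powerset.filter (Adm f g)),
          phiStrip u f (bet f S) * u ^ (psize (bet f S) - psize g) * sk u (bet f S) g := by
    have h1 : (∑ᶠ (β : ℕ → ℕ) (_ : IsPartition β ∧ (∀ i, g i ≤ β i) ∧ IsHStrip f β),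
          phiStrip u f β * u ^ (psize β - psize g) * sk u β g)
        = ∑ᶠ β ∈ {β : ℕ → ℕ | IsPartition β ∧ (∀ i, g i ≤ β i) ∧ IsHStrip f β},
            phiStrip u f β * u ^ (psize β - psize g) * sk u β g := rfl
    rw [h1, strip_set_eq hg hf hsub, finsum_mem_coe_finset]
    apply Finset.sum_image
    intro S1 hS1 S2 hS2 hbet
    rw [Finset.mem_coe, Finset.mem_filter, Finset.mem_powerset] at hS1 hS2
    exact bet_inj hf hS1.1 hS1.2 hS2.1 hS2.2 hbet
  rw [hA]
  -- step B : term match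
  have hB : ∀ S ∈ ((Finset.Icc 1 (f 0)).powerset.filter (Adm f g)),
      phiStrip u f (bet f S) * u ^ (psize (bet f S) - psize g) * sk u (bet f S) g
      = u ^ (∑ j ∈ Finset.Icc 1 (f 0), Nat.choose (conj f j - conj g j) 2) *
          ∏ j ∈ Finset.Icc 1 (f 0), colW u aZ bZ S j := by
    intro S hSmem
    rw [Finset.mem_filter, Finset.mem_powerset] at hSmem
    exact term_match hg hf hsub hSmem.1 hSmem.2 u
  rw [Finset.sum_congr rfl hB]
  -- step C : extend to full powerset
  have hC : (∑ S ∈ ((Finset.Icc 1 (f 0)).powerset.filter (Adm f g)),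
        u ^ (∑ j ∈ Finset.Icc 1 (f 0), Nat.choose (conj f j - conj g j) 2) *
          ∏ j ∈ Finset.Icc 1 (f 0), colW u aZ bZ S j)
      = ∑ S ∈ (Finset.Icc 1 (f 0)).powerset,
          u ^ (∑ j ∈ Finset.Icc 1 (f 0), Nat.choose (conj f j - conj g j) 2) *
            ∏ j ∈ Finset.Icc 1 (f 0), colW u aZ bZ S j := by
    apply Finset.sum_subset (Finset.filter_subset _ _)
    intro S hSp hSf
    rw [Finset.mem_powerset] at hSp
    rw [Finset.mem_filter] at hSf
    push_neg at hSf
    have hnAdm : ¬ Adm f g S := hSf (Finset.mem_powerset.2 hSp)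
    rw [notAdm_zero hg hf hsub hSp hnAdm]
    ring
  rw [hC]
  -- step D : column key identity
  have hbound_a : aZ (1 + f 0) = 0 := by
    simp only [haZ]
    rw [conj_eq_zero hf (by omega)]
    rfl
  have hbound_b : bZ (1 + f 0) = 0 := by
    simp only [hbZ]
    rw [conj_eq_zero hg (by have := hsub 0; omega)]
    rfl
  have hD := colKey_strong hu hU (f 0) 1 aZ bZ hbound_a hbound_b 1 1
  have hIco : Finset.Ico 1 (1 + f 0) = Finset.Icc 1 (f 0) := by
    ext x
    simp only [Finset.mem_Ico, Finset.mem_Icc]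
    omega
  rw [hIco] at hD
  have hD' : (∑ S ∈ (Finset.Icc 1 (f 0)).powerset, ∏ j ∈ Finset.Icc 1 (f 0), colW u aZ bZ S j)
      = ∏ j ∈ Finset.Icc 1 (f 0), gauss u (aZ j - bZ (j + 1)) (bZ j - bZ (j + 1)) := by
    calc (∑ S ∈ (Finset.Icc 1 (f 0)).powerset, ∏ j ∈ Finset.Icc 1 (f 0), colW u aZ bZ S j)
        = ∑ S ∈ (Finset.Icc 1 (f 0)).powerset,
            (if 1 ∈ S then (1:RatFunc ℚ) else 1) * ∏ j ∈ Finset.Icc 1 (f 0), colW u aZ bZ S j := by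
          refine Finset.sum_congr rfl fun S hS => ?_
          rw [ite_self, one_mul]
      _ = (1 * (1 - u ^ (aZ 1 - bZ 1)) + 1 * u ^ (aZ 1 - bZ 1)) *
            ∏ j ∈ Finset.Icc 1 (f 0), gauss u (aZ j - bZ (j + 1)) (bZ j - bZ (j + 1)) := hD
      _ = ∏ j ∈ Finset.Icc 1 (f 0), gauss u (aZ j - bZ (j + 1)) (bZ j - bZ (j + 1)) := by ring
  rw [← Finset.mul_sum, hD']
  rfl


end EK
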